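/- arXiv:2401.01120 — 4 statements merged into one kernel-verified Lean document; each statement's English description precedes it below -/
import Mathlib

section
/- Let J ⊂ ℝ be a closed interval and h ∈ C^k(J) for an integer k ≥ 1. Suppose that for every x ∈ J, max over 1 ≤ j ≤ k of |h^{(j)}(x)| ≥ 1. Then there exists ρ > 0 such that for every subinterval I ⊆ J with |I| ≤ ρ, h is (1/(2k))-non-flat on I. -/
open Set

/-- number of separated points needed for derivative order `j+1` -/
def mmK : ℕ → ℕ
  | 0 => 2
  | j+1 => 2 * mmK j + 1

lemma two_le_mmK : ∀ j, 2 ≤ mmK j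
  | 0 => le_refl 2
  | j+1 => by have := two_le_mmK j; simp [mmK]; omega

lemma mmK_mono : Monotone mmK := by
  apply monotone_nat_of_le_succ
  intro j; have := two_le_mmK j; simp [mmK]; omega

lemma mmK_succ_le : ∀ j, mmK j + 1 ≤ 2 ^ (j + 2)
  | 0 => by norm_num [mmK]
  | j+1 => by
      have := mmK_succ_le j
      have : 2 * (mmK j + 1) ≤ 2 * 2 ^ (j+2) := by omega
      simp only [mmK]; ring_nf; ring_nf at this; omega

lemma p_mono (p : ℕ → ℝ) (s : ℝ) (hs : 0 ≤ s) (N : ℕ)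
    (hgap : ∀ i, i + 1 < N → p i + s ≤ p (i+1)) :
    ∀ i j, i ≤ j → j < N → p i ≤ p j := by
  intro i j hij
  induction hij with
  | refl => intro _; exact le_refl _
  | @step j' hij' ih =>
      intro hj
      have h1 := ih (by omega)
      have h2 := hgap j' hj
      linarith

lemma mono_est {f f' : ℝ → ℝ} {a b κ : ℝ}
    (hf : ∀ x ∈ Set.Icc a b, HasDerivWithinAt f (f' x) (Set.Icc a b) x)
    (hκ : ∀ x ∈ Set.Icc a b, κ ≤ f' x) :
    ∀ x ∈ Set.Icc a b, ∀ y ∈ Set.Icc a b, x ≤ y → κ * (y - x) ≤ f y - f x := by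
  have hc : ContinuousOn f (Set.Icc a b) := fun x hx => (hf x hx).continuousWithinAt
  have hint : ∀ x ∈ interior (Set.Icc a b), HasDerivAt f (f' x) x := by
    intro x hx
    rw [interior_Icc] at hx
    exact (hf x (Set.Ioo_subset_Icc_self hx)).hasDerivAt (Icc_mem_nhds hx.1 hx.2)
  exact (convex_Icc a b).mul_sub_le_image_sub_of_le_deriv hc
    (fun x hx => (hint x hx).differentiableAt.differentiableWithinAt)
    (fun x hx => by rw [(hint x hx).deriv]; exact hκ x (interior_subset hx))

lemma key (j : ℕ) : ∀ (gs : ℕ → ℝ → ℝ) (a b κ s : ℝ) (p : ℕ → ℝ), 0 < κ → 0 < s →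
    (∀ i, i ≤ j → ∀ x ∈ Set.Icc a b, HasDerivWithinAt (gs i) (gs (i+1) x) (Set.Icc a b) x) →
    (∀ x ∈ Set.Icc a b, κ ≤ gs (j+1) x) →
    (∀ i, i < mmK j → p i ∈ Set.Icc a b) →
    (∀ i, i + 1 < mmK j → p i + s ≤ p (i+1)) →
    ∃ u, u < mmK j ∧ ∃ v, v < mmK j ∧ κ * s ^ (j+1) ≤ gs 0 (p u) - gs 0 (p v) := by
  induction j with
  | zero =>
      intro gs a b κ s p hκ hs hchain htop hmem hgap
      refine ⟨1, by norm_num [mmK], 0, by norm_num [mmK], ?_⟩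
      have h01 := hgap 0 (by norm_num [mmK])
      have hm0 := hmem 0 (by norm_num [mmK])
      have hm1 := hmem 1 (by norm_num [mmK])
      have := mono_est (fun x hx => hchain 0 le_rfl x hx) htop (p 0) hm0 (p 1) hm1
        (by linarith)
      have h2 : κ * s ≤ κ * (p 1 - p 0) :=
        mul_le_mul_of_nonneg_left (by linarith) hκ.le
      calc κ * s ^ 1 = κ * s := by ring
        _ ≤ _ := by linarith
  | succ j ih =>
      intro gs a b κ s p hκ hs hchain htop hmem hgap
      set M := mmK j with hMdef
      have hN : mmK (j+1) = 2*M + 1 := rfl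
      have hM2 : 2 ≤ M := two_le_mmK j
      rw [hN] at hmem hgap
      have hmono : ∀ i i', i ≤ i' → i' < 2*M+1 → p i ≤ p i' :=
        p_mono p s hs.le _ hgap
      have hme := mono_est (fun x hx => hchain (j+1) le_rfl x hx) htop
      by_cases hsign : 0 ≤ gs (j+1) (p M)
      · -- right block
        have ha' : p (M+1) ∈ Set.Icc a b := hmem (M+1) (by omega)
        have hb' : p (2*M) ∈ Set.Icc a b := hmem (2*M) (by omega)
        have hsub : Set.Icc (p (M+1)) (p (2*M)) ⊆ Set.Icc a b :=
          Set.Icc_subset_Icc ha'.1 hb'.2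
        have hbound : ∀ x ∈ Set.Icc (p (M+1)) (p (2*M)), κ * s ≤ gs (j+1) x := by
          intro x hx
          have hxab : x ∈ Set.Icc a b := hsub hx
          have hgapM : p M + s ≤ p (M+1) := hgap M (by omega)
          have hMmem : p M ∈ Set.Icc a b := hmem M (by omega)
          have h1 : κ * (x - p M) ≤ gs (j+1) x - gs (j+1) (p M) :=
            hme (p M) hMmem x hxab (by linarith [hx.1])
          have h2 : κ * s ≤ κ * (x - p M) :=
            mul_le_mul_of_nonneg_left (by linarith [hx.1]) hκ.le
          linarith
        obtain ⟨u, hu, v, hv, huv⟩ := ih gs (p (M+1)) (p (2*M)) (κ*s) s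
          (fun i => p (M+1+i)) (by positivity) hs
          (fun i hi x hx => (hchain i (by omega) x (hsub hx)).mono hsub)
          hbound
          (fun i hi => ⟨hmono (M+1) (M+1+i) (by omega) (by omega),
            hmono (M+1+i) (2*M) (by omega) (by omega)⟩)
          (fun i hi => by
            have h := hgap (M+1+i) (by omega)
            show p (M+1+i) + s ≤ p (M+1+(i+1))
            have he : M+1+(i+1) = (M+1+i)+1 := by omega
            rw [he]; exact h)
        refine ⟨M+1+u, by omega, M+1+v, by omega, ?_⟩
        calc κ * s ^ (j+1+1) = κ * s * s ^ (j+1) := by ring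
          _ ≤ _ := huv
      · -- left block
        push_neg at hsign
        have hgapM : p (M-1) + s ≤ p M := by
          have h := hgap (M-1) (by omega)
          have he : M-1+1 = M := by omega
          rwa [he] at h
        have ha' : p 0 ∈ Set.Icc a b := hmem 0 (by omega)
        have hb' : p (M-1) ∈ Set.Icc a b := hmem (M-1) (by omega)
        have hsub : Set.Icc (p 0) (p (M-1)) ⊆ Set.Icc a b :=
          Set.Icc_subset_Icc ha'.1 hb'.2
        have hbound : ∀ x ∈ Set.Icc (p 0) (p (M-1)), κ * s ≤ -(gs (j+1) x) := by
          intro x hx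
          have hxab : x ∈ Set.Icc a b := hsub hx
          have hMmem : p M ∈ Set.Icc a b := hmem M (by omega)
          have h1 : κ * (p M - x) ≤ gs (j+1) (p M) - gs (j+1) x :=
            hme x hxab (p M) hMmem (by linarith [hx.2])
          have h2 : κ * s ≤ κ * (p M - x) :=
            mul_le_mul_of_nonneg_left (by linarith [hx.2]) hκ.le
          linarith
        obtain ⟨u, hu, v, hv, huv⟩ := ih (fun i x => -(gs i x)) (p 0) (p (M-1)) (κ*s) s
          p (by positivity) hs
          (fun i hi x hx => ((hchain i (by omega) x (hsub hx)).mono hsub).neg)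
          hbound
          (fun i hi => ⟨hmono 0 i (by omega) (by omega),
            hmono i (M-1) (by omega) (by omega)⟩)
          (fun i hi => hgap i (by omega))
        refine ⟨v, by omega, u, by omega, ?_⟩
        have : κ * s * s ^ (j+1) ≤ -(gs 0 (p u)) - -(gs 0 (p v)) := huv
        calc κ * s ^ (j+1+1) = κ * s * s ^ (j+1) := by ring
          _ ≤ gs 0 (p v) - gs 0 (p u) := by linarith

lemma exists_sep (m : ℕ) (As : Set ℝ) (r : ℝ) (hr : 0 < r)
    (hcov : ∀ S : Finset ℝ, As ⊆ ⋃ x ∈ S, Metric.closedBall x r → m ≤ S.card) :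
    ∃ T : Finset ℝ, ↑T ⊆ As ∧ T.card = m ∧
      ∀ x ∈ T, ∀ y ∈ T, x ≠ y → r < dist x y := by
  induction m with
  | zero => exact ⟨∅, by simp, by simp, by simp⟩
  | succ m ih =>
      obtain ⟨T, hTA, hTc, hTsep⟩ := ih (fun S hS => le_trans (Nat.le_succ m) (hcov S hS))
      by_cases hall : ∀ a ∈ As, ∃ t ∈ T, dist a t ≤ r
      · exfalso
        have hcv : As ⊆ ⋃ x ∈ T, Metric.closedBall x r := by
          intro a ha
          obtain ⟨t, htT, htd⟩ := hall a ha
          exact Set.mem_biUnion htT (Metric.mem_closedBall.mpr htd)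
        have := hcov T hcv
        omega
      · push_neg at hall
        obtain ⟨a, haA, ha⟩ := hall
        have haT : a ∉ T := fun haT => by
          have := ha a haT; simp at this; linarith
        refine ⟨insert a T, ?_, by rw [Finset.card_insert_of_notMem haT, hTc], ?_⟩
        · intro x hx
          simp only [Finset.coe_insert, Set.mem_insert_iff] at hx
          rcases hx with rfl | hx
          · exact haA
          · exact hTA hx
        · intro x hx y hy hxy
          simp only [Finset.mem_insert] at hx hy
          rcases hx with rfl | hx <;> rcases hy with rfl | hy
          · exact absurd rfl hxy
          · exact ha y hy
          · rw [dist_comm]; exact ha x hx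
          · exact hTsep x hx y hy hxy

/-- `h` is `δ`-non-flat on `J`: for all `ε > 0` there is `n₀` such that for all `n > n₀`
and every bounded `A ⊆ J`, if every cover of `A` by balls of diameter `2^{-δn}` needs at
least `2^{εn}` balls, then `diam (h '' A) ≥ 2^{-n}`. -/
def IsNonFlat (δ : ℝ) (h : ℝ → ℝ) (J : Set ℝ) : Prop :=
  ∀ ε > (0:ℝ), ∃ n₀ : ℕ, ∀ n : ℕ, n > n₀ → ∀ A : Set ℝ, A ⊆ J → Bornology.IsBounded A →
    (∀ S : Finset ℝ,
        A ⊆ ⋃ x ∈ S, Metric.closedBall x ((2:ℝ) ^ (-(δ * n)) / 2) →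
        (2:ℝ) ^ (ε * n) ≤ S.card) →
    (2:ℝ) ^ (-(n:ℝ)) ≤ Metric.diam (h '' A)

/-- If `h ∈ C^k(J)` and at every point of `J` some derivative of order `1 ≤ j ≤ k` has
absolute value at least `1`, then there is `ρ > 0` such that `h` is `1/(2k)`-non-flat on
every subinterval of `J` of length at most `ρ`. -/
theorem stmt2 (A B : ℝ) (hAB : A ≤ B) (k : ℕ) (hk : 1 ≤ k) (h : ℝ → ℝ)
    (hsmooth : ContDiffOn ℝ k h (Set.Icc A B))
    (hbig : ∀ x ∈ Set.Icc A B, ∃ j : ℕ, 1 ≤ j ∧ j ≤ k ∧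
      1 ≤ |iteratedDerivWithin j h (Set.Icc A B) x|) :
    ∃ ρ > (0:ℝ), ∀ c d : ℝ, Set.Icc c d ⊆ Set.Icc A B → d - c ≤ ρ →
      IsNonFlat (1 / (2 * k)) h (Set.Icc c d) := by
  have hkR : (0:ℝ) < k := by exact_mod_cast hk
  rcases eq_or_lt_of_le hAB with hAB' | hAB'
  · -- degenerate case A = B
    refine ⟨1, one_pos, fun c d hcd _ => ?_⟩
    intro ε hε
    refine ⟨1, fun n hn As hAs hbdd hcov => ?_⟩
    exfalso
    have hsub : As ⊆ {A} := by
      intro x hx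
      have := hcd (hAs hx)
      rw [← hAB', Set.Icc_self] at this
      exact this
    have hrpos : (0:ℝ) ≤ (2:ℝ) ^ (-(1 / (2 * (k:ℝ)) * n)) / 2 := by positivity
    have hcv : As ⊆ ⋃ x ∈ ({A} : Finset ℝ),
        Metric.closedBall x ((2:ℝ) ^ (-(1 / (2 * (k:ℝ)) * n)) / 2) := by
      intro x hx
      have hxA : x = A := hsub hx
      refine Set.mem_biUnion (Finset.mem_singleton_self A) ?_
      rw [hxA]
      exact Metric.mem_closedBall_self hrpos
    have h1 := hcov {A} hcv
    rw [Finset.card_singleton] at h1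
    have h2 : (2:ℝ) ^ (0:ℝ) < (2:ℝ) ^ (ε * n) := by
      apply Real.rpow_lt_rpow_left_iff (x := 2) one_lt_two |>.mpr
      have : (0:ℝ) < n := by exact_mod_cast Nat.lt_of_lt_of_le Nat.zero_lt_one hn.le
      positivity
    rw [Real.rpow_zero] at h2
    push_cast at h1
    linarith
  · -- main case A < B
    have hUD : UniqueDiffOn ℝ (Set.Icc A B) := uniqueDiffOn_Icc hAB'
    set g : ℕ → ℝ → ℝ := fun i => iteratedDerivWithin i h (Set.Icc A B) with hgdef
    have hcont : ∀ j : ℕ, j ≤ k → ContinuousOn (g j) (Set.Icc A B) := by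
      intro j hj
      exact hsmooth.continuousOn_iteratedDerivWithin (by exact_mod_cast hj) hUD
    have hUC : ∀ j : ℕ, ∃ ρj : ℝ, 0 < ρj ∧ (j ≤ k → ∀ x ∈ Set.Icc A B, ∀ y ∈ Set.Icc A B,
        dist x y < ρj → dist (g j x) (g j y) < 1/2) := by
      intro j
      by_cases hj : j ≤ k
      · have huc : UniformContinuousOn (g j) (Set.Icc A B) :=
          isCompact_Icc.uniformContinuousOn_of_continuous (hcont j hj)
        rw [Metric.uniformContinuousOn_iff] at huc
        obtain ⟨δ, hδ, hδ'⟩ := huc (1/2) (by norm_num)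
        exact ⟨δ, hδ, fun _ x hx y hy hxy => hδ' x hx y hy hxy⟩
      · exact ⟨1, one_pos, fun h' => absurd h' hj⟩
    choose ρf hρf1 hρf2 using hUC
    set ρ : ℝ := ((Finset.range (k+1)).inf' ⟨0, Finset.mem_range.mpr (by omega)⟩ ρf) / 2
      with hρdef
    have hρlt : ∀ j ≤ k, ρ < ρf j := by
      intro j hj
      have h1 : (Finset.range (k+1)).inf' ⟨0, Finset.mem_range.mpr (by omega)⟩ ρf ≤ ρf j :=
        Finset.inf'_le _ (Finset.mem_range.mpr (by omega))
      have h2 : 0 < (Finset.range (k+1)).inf' ⟨0, Finset.mem_range.mpr (by omega)⟩ ρf := by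
        refine (Finset.lt_inf'_iff _).2 ?_
        exact fun j _ => hρf1 j
      rw [hρdef]; linarith
    have hρpos : 0 < ρ := by
      rw [hρdef]
      have h2 : 0 < (Finset.range (k+1)).inf' ⟨0, Finset.mem_range.mpr (by omega)⟩ ρf := by
        refine (Finset.lt_inf'_iff _).2 ?_
        exact fun j _ => hρf1 j
      linarith
    refine ⟨ρ, hρpos, fun c d hcd hlen => ?_⟩
    intro ε hε
    refine ⟨max (2*k+2) ⌈((k:ℝ)+1)/ε⌉₊, fun n hn As hAs hbdd hcov => ?_⟩
    set r : ℝ := (2:ℝ) ^ (-(1 / (2 * (k:ℝ)) * n)) / 2 with hrdef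
    have hrpos : 0 < r := by positivity
    -- every cover needs at least mmK (k-1) balls
    have hm : ∀ S : Finset ℝ, As ⊆ ⋃ x ∈ S, Metric.closedBall x r → mmK (k-1) ≤ S.card := by
      intro S hS
      have h1 := hcov S hS
      have hnK : ((k:ℝ)+1) ≤ ε * n := by
        have h2 : (⌈((k:ℝ)+1)/ε⌉₊ : ℝ) ≤ n := by
          have : ⌈((k:ℝ)+1)/ε⌉₊ ≤ n := le_of_lt (lt_of_le_of_lt (le_max_right _ _) hn)
          exact_mod_cast this
        have h3 : ((k:ℝ)+1)/ε ≤ n := le_trans (Nat.le_ceil _) h2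
        rw [div_le_iff₀ hε] at h3
        linarith [h3]
      have h2 : ((mmK (k-1) : ℝ)) ≤ (2:ℝ) ^ (ε * n) := by
        have ha : (mmK (k-1) : ℝ) ≤ (2:ℝ) ^ ((k+1 : ℕ) : ℝ) := by
          rw [Real.rpow_natCast]
          have hb : mmK (k-1) ≤ 2 ^ (k+1) := by
            have := mmK_succ_le (k-1)
            have he : k - 1 + 2 = k + 1 := by omega
            rw [he] at this
            omega
          exact_mod_cast hb
        refine le_trans ha ?_
        apply Real.rpow_le_rpow_left_iff (x := 2) one_lt_two |>.mpr
        push_cast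
        exact hnK
      have h3 : ((mmK (k-1) : ℝ)) ≤ (S.card : ℝ) := le_trans h2 h1
      exact_mod_cast h3
    obtain ⟨T, hTA, hTcard, hTsep⟩ := exists_sep (mmK (k-1)) As r hrpos hm
    -- sorted enumeration of T
    set l : List ℝ := T.sort (· ≤ ·) with hldef
    have hllen : l.length = mmK (k-1) := by rw [hldef, Finset.length_sort, hTcard]
    set p : ℕ → ℝ := fun i => l.getD i 0 with hpdef
    have hpT : ∀ i, i < mmK (k-1) → p i ∈ T := by
      intro i hi
      have hi' : i < l.length := by omega
      rw [hpdef]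
      simp only [List.getD_eq_getElem l 0 hi']
      exact (Finset.mem_sort _).mp (l.getElem_mem hi')
    have hpA : ∀ i, i < mmK (k-1) → p i ∈ As := fun i hi => hTA (hpT i hi)
    have hpgap : ∀ i, i + 1 < mmK (k-1) → p i + r ≤ p (i+1) := by
      intro i hi
      have hi1 : i < l.length := by omega
      have hi2 : i + 1 < l.length := by omega
      have hlt : p i < p (i+1) := by
        rw [hpdef]
        simp only [List.getD_eq_getElem l 0 hi1, List.getD_eq_getElem l 0 hi2]
        exact List.pairwise_iff_getElem.mp (Finset.sortedLT_sort T).pairwise i (i+1) hi1 hi2 (by omega)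
      have hd : r < dist (p i) (p (i+1)) :=
        hTsep _ (hpT i (by omega)) _ (hpT (i+1) hi) (ne_of_lt hlt)
      rw [Real.dist_eq, abs_of_neg (by linarith)] at hd
      linarith
    -- As is nonempty, so c ≤ d
    have hTne : T.Nonempty := Finset.card_pos.mp (by rw [hTcard]; have := two_le_mmK (k-1); omega)
    obtain ⟨x0, hx0⟩ := hTne
    have hcdle : c ≤ d := by
      have := hAs (hTA hx0)
      exact le_trans this.1 this.2
    have hcIcc : c ∈ Set.Icc c d := ⟨le_refl c, hcdle⟩
    obtain ⟨j₀, hj₀1, hj₀k, hj₀big⟩ := hbig c (hcd hcIcc)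
    -- derivative bound on Icc c d
    have hnear : ∀ y ∈ Set.Icc c d, dist (g j₀ y) (g j₀ c) < 1/2 := by
      intro y hy
      apply hρf2 j₀ hj₀k y (hcd hy) c (hcd hcIcc)
      rw [Real.dist_eq]
      have h1 : |y - c| ≤ d - c := by
        obtain ⟨hy1, hy2⟩ := hy
        rw [abs_le]; constructor <;> linarith
      exact lt_of_le_of_lt (le_trans h1 hlen) (hρlt j₀ hj₀k)
    -- chain of derivatives on Icc c d
    have hchain : ∀ i, i ≤ j₀ - 1 → ∀ x ∈ Set.Icc c d,
        HasDerivWithinAt (g i) (g (i+1) x) (Set.Icc c d) x := by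
      intro i hi x hx
      have hxAB := hcd hx
      have hik : (i : WithTop ℕ∞) < (k : WithTop ℕ∞) := by
        have : i < k := by omega
        exact_mod_cast this
      have hdiff : DifferentiableWithinAt ℝ (g i) (Set.Icc A B) x :=
        hsmooth.differentiableOn_iteratedDerivWithin hik hUD x hxAB
      have h1 : HasDerivWithinAt (g i) (derivWithin (g i) (Set.Icc A B) x) (Set.Icc A B) x :=
        hdiff.hasDerivWithinAt
      have h2 : g (i+1) x = derivWithin (g i) (Set.Icc A B) x :=
        congrFun iteratedDerivWithin_succ x
      rw [← h2] at h1
      exact h1.mono hcd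
    -- oscillation lower bound
    have hosc : ∃ u, u < mmK (j₀-1) ∧ ∃ v, v < mmK (j₀-1) ∧
        (1/2) * r ^ ((j₀-1)+1) ≤ h (p u) - h (p v) := by
      have hg0 : g 0 = h := iteratedDerivWithin_zero
      have hj₀e : (j₀ - 1) + 1 = j₀ := by omega
      have hmm : mmK (j₀-1) ≤ mmK (k-1) := mmK_mono (by omega)
      have hpmem' : ∀ i, i < mmK (j₀-1) → p i ∈ Set.Icc c d :=
        fun i hi => hAs (hpA i (by omega))
      have hpgap' : ∀ i, i + 1 < mmK (j₀-1) → p i + r ≤ p (i+1) :=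
        fun i hi => hpgap i (by omega)
      rcases le_abs.mp hj₀big with hpos | hneg
      · have htop : ∀ x ∈ Set.Icc c d, (1/2 : ℝ) ≤ g ((j₀-1)+1) x := by
          intro x hx
          rw [hj₀e]
          have := hnear x hx
          rw [Real.dist_eq, abs_lt] at this
          linarith [this.1]
        obtain ⟨u, hu, v, hv, huv⟩ := key (j₀-1) g c d (1/2) r p (by norm_num) hrpos
          hchain htop hpmem' hpgap'
        rw [hg0] at huv
        exact ⟨u, hu, v, hv, huv⟩
      · have htop : ∀ x ∈ Set.Icc c d, (1/2 : ℝ) ≤ -(g ((j₀-1)+1) x) := by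
          intro x hx
          rw [hj₀e]
          have := hnear x hx
          rw [Real.dist_eq, abs_lt] at this
          linarith [this.2]
        obtain ⟨u, hu, v, hv, huv⟩ := key (j₀-1) (fun i x => -(g i x)) c d (1/2) r p
          (by norm_num) hrpos
          (fun i hi x hx => (hchain i hi x hx).neg) htop hpmem' hpgap'
        refine ⟨v, hv, u, hu, ?_⟩
        simp only [hg0] at huv
        linarith [huv]
    obtain ⟨u, hu, v, hv, huv⟩ := hosc
    have hj₀e : (j₀ - 1) + 1 = j₀ := by omega
    rw [hj₀e] at huv
    -- image is bounded
    have hbddim : Bornology.IsBounded (h '' As) := by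
      have h1 : h '' As ⊆ h '' Set.Icc A B :=
        Set.image_mono (fun x hx => hcd (hAs hx))
      exact (isCompact_Icc.image_of_continuousOn hsmooth.continuousOn).isBounded.subset h1
    have hmm : mmK (j₀-1) ≤ mmK (k-1) := mmK_mono (by omega)
    have hmemu : h (p u) ∈ h '' As := Set.mem_image_of_mem h (hpA u (by omega))
    have hmemv : h (p v) ∈ h '' As := Set.mem_image_of_mem h (hpA v (by omega))
    have hdiam : (1/2) * r ^ j₀ ≤ Metric.diam (h '' As) := by
      refine le_trans ?_ (Metric.dist_le_diam_of_mem hbddim hmemu hmemv)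
      rw [Real.dist_eq]
      exact le_trans huv (le_abs_self _)
    -- final exponent computation
    refine le_trans ?_ hdiam
    have he1 : r = (2:ℝ) ^ (-(1 / (2 * (k:ℝ)) * n) - 1) := by
      rw [hrdef, Real.rpow_sub two_pos, Real.rpow_one]
    have he2 : (1/2 : ℝ) * r ^ j₀ =
        (2:ℝ) ^ (-1 + (-(1 / (2 * (k:ℝ)) * n) - 1) * j₀) := by
      rw [he1, ← Real.rpow_natCast ((2:ℝ) ^ (-(1 / (2 * (k:ℝ)) * n) - 1)) j₀,
        ← Real.rpow_mul two_pos.le, Real.rpow_add two_pos]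
      norm_num [Real.rpow_neg_one]
    rw [he2]
    apply Real.rpow_le_rpow_left_iff (x := 2) one_lt_two |>.mpr
    have hjk : (j₀ : ℝ) ≤ (k : ℝ) := by exact_mod_cast hj₀k
    have hj₀R : (1:ℝ) ≤ (j₀ : ℝ) := by exact_mod_cast hj₀1
    have hnR : (2*(k:ℝ)+3) ≤ n := by
      have : 2*k+3 ≤ n := by
        have := lt_of_le_of_lt (le_max_left (2*k+2) ⌈((k:ℝ)+1)/ε⌉₊) hn
        omega
      exact_mod_cast this
    have hhalf : (1 / (2 * (k:ℝ))) * (j₀:ℝ) ≤ 1/2 := by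
      rw [div_mul_eq_mul_div, one_mul, div_le_div_iff₀ (by positivity) (by norm_num)]
      linarith
    have hmain : (1 / (2 * (k:ℝ)) * n) * j₀ ≤ n / 2 := by
      have hn0 : (0:ℝ) ≤ n := by positivity
      calc (1 / (2 * (k:ℝ)) * n) * j₀ = ((1 / (2 * (k:ℝ))) * (j₀:ℝ)) * n := by ring
        _ ≤ (1/2) * n := mul_le_mul_of_nonneg_right hhalf hn0
        _ = n / 2 := by ring
    nlinarith [hmain, hjk, hj₀R, hnR]
end

section
/- Let J ⊆ ℝ be a compact interval and g : J → ℝ a real analytic function that is not affine (i.e., not of the form x ↦ c₁x + c₂ on J). Then there exist c > 0 and an integer k ≥ 2 such that for all x ∈ J, max over 2 ≤ j ≤ k of |g^{(j)}(x)| ≥ c. -/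
open Filter Topology

/-- A non-affine real analytic function on a compact interval has, for some `c > 0` and
`k ≥ 2`, at every point a derivative of order `2 ≤ j ≤ k` of absolute value at least `c`. -/
theorem stmt3 (A B : ℝ) (hAB : A ≤ B) (g : ℝ → ℝ)
    (hg : AnalyticOnNhd ℝ g (Set.Icc A B))
    (hnonaffine : ¬ ∃ c₁ c₂ : ℝ, ∀ x ∈ Set.Icc A B, g x = c₁ * x + c₂) :
    ∃ c > (0:ℝ), ∃ k : ℕ, 2 ≤ k ∧ ∀ x ∈ Set.Icc A B,
      ∃ j : ℕ, 2 ≤ j ∧ j ≤ k ∧ c ≤ |iteratedDeriv j g x| := by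
  by_contra hcon
  push_neg at hcon
  have hx : ∀ n : ℕ, ∃ x ∈ Set.Icc A B, ∀ j, 2 ≤ j → j ≤ n + 2 →
      |iteratedDeriv j g x| < 1/(n+1) := by
    intro n
    obtain ⟨x, hx1, hx2⟩ := hcon (1/(n+1)) (by positivity) (n+2) (by omega)
    exact ⟨x, hx1, hx2⟩
  choose u hu hu' using hx
  obtain ⟨x₀, hx₀, φ, hφ, hlim⟩ := (isCompact_Icc).tendsto_subseq hu
  have hder : ∀ j, 2 ≤ j → iteratedDeriv j g x₀ = 0 := by
    intro j hj
    have hAj : AnalyticOnNhd ℝ (iteratedDeriv j g) (Set.Icc A B) := by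
      have := hg.iterated_deriv j
      rwa [← iteratedDeriv_eq_iterate] at this
    have hcont : ContinuousAt (iteratedDeriv j g) x₀ := (hAj x₀ hx₀).continuousAt
    have h1 : Tendsto (fun n => iteratedDeriv j g (u (φ n))) atTop
        (𝓝 (iteratedDeriv j g x₀)) := hcont.tendsto.comp hlim
    have h2 : Tendsto (fun n => iteratedDeriv j g (u (φ n))) atTop (𝓝 0) := by
      apply squeeze_zero_norm' (a := fun n => 1/((φ n : ℝ)+1))
      · filter_upwards [eventually_ge_atTop j] with n hn
        have hjn : j ≤ φ n + 2 := le_trans (le_trans hn (hφ.le_apply)) (by omega)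
        exact (hu' (φ n) j hj hjn).le
      · have h3 : Tendsto (fun n : ℕ => 1/((n : ℝ)+1)) atTop (𝓝 0) :=
          tendsto_one_div_add_atTop_nhds_zero_nat
        exact h3.comp (hφ.tendsto_atTop)
    exact tendsto_nhds_unique h1 h2
  obtain ⟨p, hp⟩ := hg x₀ hx₀
  obtain ⟨r, hpr⟩ := hp
  have hcoef : ∀ n : ℕ, ∀ y : ℝ, p n (fun _ => y) = y^n * p n (fun _ => 1) := by
    intro n y
    have := (p n).map_smul_univ (fun _ : Fin n => y) (fun _ => 1)
    simpa [smul_eq_mul] using this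
  have hcoef0 : ∀ n : ℕ, 2 ≤ n → p n (fun _ => (1:ℝ)) = 0 := by
    intro n hn
    have h1 := hpr.factorial_smul (1:ℝ) n
    have h2 : iteratedFDeriv ℝ n g x₀ (fun _ => (1:ℝ)) = iteratedDeriv n g x₀ := by
      rw [iteratedFDeriv_apply_eq_iteratedDeriv_mul_prod]; simp
    rw [h2, hder n hn] at h1
    have hfac : (n.factorial : ℝ) ≠ 0 := Nat.cast_ne_zero.mpr n.factorial_ne_zero
    have : (n.factorial : ℝ) * p n (fun _ => (1:ℝ)) = 0 := by
      simpa [nsmul_eq_mul] using h1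
    exact (mul_eq_zero.mp this).resolve_left hfac
  set c₁ : ℝ := p 1 (fun _ => 1) with hc₁
  set c₀ : ℝ := p 0 (fun _ => 1) with hc₀
  have hev : g =ᶠ[𝓝 x₀] fun x => c₁ * x + (c₀ - c₁ * x₀) := by
    have hball : Metric.eball x₀ r ∈ 𝓝 x₀ := Metric.eball_mem_nhds x₀ hpr.r_pos
    filter_upwards [hball] with x hxball
    have hy : x - x₀ ∈ Metric.eball (0:ℝ) r := by
      simpa [edist_eq_enorm_sub, edist_zero_right] using hxball
    have hsum := hpr.hasSum hy
    have hsum2 : HasSum (fun n => p n (fun _ => x - x₀)) (c₀ + c₁ * (x - x₀)) := by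
      have hz : ∀ n ∉ ({0, 1} : Finset ℕ), p n (fun _ => x - x₀) = 0 := by
        intro n hn
        simp only [Finset.mem_insert, Finset.mem_singleton] at hn
        rw [hcoef, hcoef0 n (by omega), mul_zero]
      have := hasSum_sum_of_ne_finset_zero (L := SummationFilter.unconditional ℕ) hz
      convert this using 1
      rw [Finset.sum_insert (by simp), Finset.sum_singleton, hcoef 0, hcoef 1]
      ring
    have := hsum.unique hsum2
    rw [add_sub_cancel] at this
    rw [this]; ring
  have haff : AnalyticOnNhd ℝ (fun x => g x - (c₁ * x + (c₀ - c₁ * x₀))) (Set.Icc A B) := by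
    apply hg.sub
    apply AnalyticOnNhd.add
    · exact (analyticOnNhd_const).mul analyticOnNhd_id
    · exact analyticOnNhd_const
  have hzero : Set.EqOn (fun x => g x - (c₁ * x + (c₀ - c₁ * x₀))) 0 (Set.Icc A B) := by
    apply haff.eqOn_zero_of_preconnected_of_eventuallyEq_zero isPreconnected_Icc hx₀
    filter_upwards [hev] with x hx
    simp [hx]
  apply hnonaffine
  refine ⟨c₁, c₀ - c₁ * x₀, fun x hx => ?_⟩
  have := hzero hx
  simp only [Pi.zero_apply] at this
  linarith
end

section
/- Fix an integer k ≥ 2 and reals 1 < a < b. Let m ≥ 1 and let P(x) = Σ_{j=0}^m l_j x^j be a real polynomial with deg(P) = m, |l_m| ≥ 1, and at most k nonzero coefficients. Then for any q > 2(1 + log_a 2 + log_a 3), there exist at most 2k + 2 subintervals I_i ⊂ [a,b], each of length |I_i| ≤ a^{−mq}, such that |P(x)| ≥ a^{−(mq)²} for all x ∈ [a,b] \ ∪_i I_i. -/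
open Polynomial Finset


lemma taylor_coeff_eq (h : ℝ) (p : ℝ[X]) (n : ℕ) (hp : p.natDegree ≤ n + 1) :
    (Polynomial.taylor h p).coeff n = p.coeff n + (n + 1) * p.coeff (n + 1) * h := by
  rw [taylor_coeff]
  have hd : (hasseDeriv n p).natDegree < 2 := by
    have := p.natDegree_hasseDeriv_le n
    omega
  rw [eval_eq_sum_range' hd, Finset.sum_range_succ, Finset.sum_range_one]
  simp only [hasseDeriv_coeff, pow_zero, mul_one, pow_one, zero_add]
  rw [Nat.choose_self]
  have h1 : (1 + n).choose n = n + 1 := by rw [Nat.add_comm]; exact Nat.choose_succ_self_right n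
  rw [h1]; push_cast; ring

lemma taylor_coeff_top (h : ℝ) (p : ℝ[X]) (n : ℕ) (hp : p.natDegree ≤ n + 1) :
    (Polynomial.taylor h p).coeff (n + 1) = p.coeff (n + 1) := by
  rw [taylor_coeff]
  have hd : (hasseDeriv (n+1) p).natDegree < 1 := by
    have := p.natDegree_hasseDeriv_le (n+1)
    omega
  rw [eval_eq_sum_range' hd, Finset.sum_range_one]
  simp [hasseDeriv_coeff]

lemma fd_eq (h : ℝ) : ∀ (n : ℕ) (p : ℝ[X]), p.natDegree ≤ n → ∀ x : ℝ,
    (fwdDiff h)^[n] (fun y => p.eval y) x = (n.factorial : ℝ) * h ^ n * p.coeff n := by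
  intro n
  induction n with
  | zero =>
    intro p hp x
    rw [Polynomial.eq_C_of_natDegree_le_zero hp]
    simp
  | succ n ih =>
    intro p hp x
    rw [Function.iterate_succ_apply]
    have hfd : fwdDiff h (fun y => p.eval y)
        = fun y => (Polynomial.taylor h p - p).eval y := by
      funext y
      simp [fwdDiff, taylor_eval]
    set q := Polynomial.taylor h p - p with hq
    have hqc : ∀ j, q.coeff j = (Polynomial.taylor h p).coeff j - p.coeff j := by
      intro j; simp [hq]
    have hq_deg : q.natDegree ≤ n := by
      rw [Polynomial.natDegree_le_iff_coeff_eq_zero]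
      intro N hN
      rcases Nat.lt_or_ge N (n + 2) with hN2 | hN2
      · have hNe : N = n + 1 := by omega
        rw [hqc, hNe, taylor_coeff_top h p n hp, sub_self]
      · rw [hqc]
        have h1 : (Polynomial.taylor h p).coeff N = 0 := by
          apply coeff_eq_zero_of_natDegree_lt
          rw [natDegree_taylor]; omega
        have h2 : p.coeff N = 0 := by
          apply coeff_eq_zero_of_natDegree_lt; omega
        rw [h1, h2, sub_self]
    have hq_coeff : q.coeff n = (n + 1) * p.coeff (n + 1) * h := by
      rw [hqc, taylor_coeff_eq h p n hp]; ring
    rw [hfd, ih q hq_deg x, hq_coeff, Nat.factorial_succ]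
    push_cast
    ring

lemma good_point (p : ℝ[X]) (m : ℕ) (hm : 1 ≤ m) (hdeg : p.natDegree ≤ m)
    (hlead : 1 ≤ |p.coeff m|) (δ : ℝ) (hδ : 0 < δ) (c : ℝ) :
    ∃ y ∈ Set.Icc c (c + δ), (δ / (2 * m)) ^ m ≤ |p.eval y| := by
  by_contra hcon
  push_neg at hcon
  set h : ℝ := δ / m with hh
  have hmR : (0:ℝ) < m := by exact_mod_cast hm
  have hhpos : 0 < h := div_pos hδ hmR
  have hB : (δ / (2 * m)) ^ m = h ^ m / 2 ^ m := by
    rw [hh, div_pow, div_pow]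
    rw [mul_pow]
    ring
  have key := fd_eq h m p hdeg c
  rw [fwdDiff_iter_eq_sum_shift] at key
  have habs : (m.factorial : ℝ) * h ^ m * |p.coeff m|
      = |∑ k ∈ range (m + 1), ((-1 : ℤ) ^ (m - k) * (m.choose k) : ℤ) • p.eval (c + k • h)| := by
    rw [key, abs_mul, abs_mul]
    rw [abs_of_nonneg (by positivity : (0:ℝ) ≤ (m.factorial : ℝ)),
        abs_of_nonneg (by positivity : (0:ℝ) ≤ h ^ m)]
  have hlt : |∑ k ∈ range (m + 1), ((-1 : ℤ) ^ (m - k) * (m.choose k) : ℤ) • p.eval (c + k • h)|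
      < h ^ m := by
    calc |∑ k ∈ range (m + 1), ((-1 : ℤ) ^ (m - k) * (m.choose k) : ℤ) • p.eval (c + k • h)|
        ≤ ∑ k ∈ range (m + 1), |((-1 : ℤ) ^ (m - k) * (m.choose k) : ℤ) • p.eval (c + k • h)| :=
          Finset.abs_sum_le_sum_abs _ _
      _ < ∑ k ∈ range (m + 1), (m.choose k : ℝ) * (h ^ m / 2 ^ m) := by
          apply Finset.sum_lt_sum_of_nonempty (by simp)
          intro k hk
          rw [Finset.mem_range] at hk
          have hkm : k ≤ m := by omega
          have hy : c + k • h ∈ Set.Icc c (c + δ) := by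
            constructor
            · have : (0:ℝ) ≤ k • h := by positivity
              linarith
            · have : (k:ℝ) * h ≤ (m:ℝ) * h := by
                apply mul_le_mul_of_nonneg_right _ hhpos.le
                exact_mod_cast hkm
              have hmh : (m:ℝ) * h = δ := by rw [hh]; field_simp
              simp only [nsmul_eq_mul]
              linarith
          have := hcon _ hy
          rw [zsmul_eq_mul, abs_mul]
          push_cast
          rw [abs_mul, abs_pow, abs_neg, abs_one, one_pow, one_mul,
              Nat.abs_cast]
          apply mul_lt_mul_of_pos_left _
          · exact_mod_cast m.choose_pos hkm
          · rw [← hB]; exact this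
      _ = (∑ k ∈ range (m + 1), (m.choose k : ℝ)) * (h ^ m / 2 ^ m) := by
          rw [Finset.sum_mul]
      _ = h ^ m := by
          have : ∑ k ∈ range (m + 1), (m.choose k : ℝ) = 2 ^ m := by
            exact_mod_cast congrArg (Nat.cast : ℕ → ℝ) (Nat.sum_range_choose m)
          rw [this]
          field_simp
  have hge : h ^ m ≤ (m.factorial : ℝ) * h ^ m * |p.coeff m| := by
    have h1 : (1:ℝ) ≤ (m.factorial : ℝ) := by exact_mod_cast m.factorial_pos
    have h2 : h ^ m * 1 ≤ h ^ m * |p.coeff m| :=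
      mul_le_mul_of_nonneg_left hlead (pow_pos hhpos m).le
    have h3 : 1 * (h ^ m * |p.coeff m|) ≤ (m.factorial : ℝ) * (h ^ m * |p.coeff m|) :=
      mul_le_mul_of_nonneg_right h1 (by positivity)
    nlinarith [h2, h3]
  linarith [habs ▸ hge]


lemma sparse_aux : ∀ (N : ℕ) (p : ℝ[X]), p ≠ 0 → p.support.card ≤ N →
    (p.roots.toFinset.filter fun x => 0 < x).card + 1 ≤ p.support.card := by
  intro N
  induction N with
  | zero =>
    intro p hp hcard
    exact absurd (Finset.card_eq_zero.mp (Nat.le_zero.mp hcard))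
      (by simpa using (Polynomial.support_nonempty.mpr hp).ne_empty)
  | succ N ih =>
    intro p hp hcard
    set n := p.natTrailingDegree with hn
    have hns : n ∈ p.support := natTrailingDegree_mem_support_of_nonzero hp
    have hsupp_pos : 1 ≤ p.support.card := Finset.card_pos.mpr ⟨n, hns⟩
    set g : ℝ[X] := X * derivative p - C (n : ℝ) * p with hg
    have gcoeff : ∀ j : ℕ, g.coeff j = ((j : ℝ) - n) * p.coeff j := by
      intro j
      rcases j with _ | jj
      · simp [hg, mul_coeff_zero]
      · rw [hg, Polynomial.coeff_sub, Polynomial.coeff_X_mul, Polynomial.coeff_derivative,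
          Polynomial.coeff_C_mul]
        push_cast
        ring
    have hsub : g.support ⊆ p.support.erase n := by
      intro j hj
      rw [Polynomial.mem_support_iff] at hj
      rw [gcoeff j] at hj
      rcases mul_ne_zero_iff.mp hj with ⟨h1, h2⟩
      rw [Finset.mem_erase, Polynomial.mem_support_iff]
      refine ⟨fun hjn => h1 ?_, h2⟩
      rw [hjn]
      ring
    by_cases hg0 : g = 0
    · -- p is a monomial, no positive roots
      have hmono : p = Polynomial.monomial n (p.coeff n) := by
        ext j
        rw [Polynomial.coeff_monomial]
        by_cases hj : n = j
        · rw [if_pos hj, hj]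
        · rw [if_neg hj]
          have := gcoeff j
          rw [hg0] at this
          simp only [Polynomial.coeff_zero] at this
          rcases mul_eq_zero.mp this.symm with h1 | h1
          · exfalso
            apply hj
            have : (j : ℝ) = n := by linarith [sub_eq_zero.mp h1]
            exact_mod_cast this.symm
          · exact h1
      have hempty : (p.roots.toFinset.filter fun x => 0 < x) = ∅ := by
        rw [Finset.eq_empty_iff_forall_notMem]
        intro x hx
        rw [Finset.mem_filter, Multiset.mem_toFinset, Polynomial.mem_roots hp] at hx
        obtain ⟨hroot, hxpos⟩ := hx
        rw [hmono] at hroot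
        simp only [Polynomial.IsRoot, Polynomial.eval_monomial] at hroot
        rcases mul_eq_zero.mp hroot with h1 | h1
        · exact (Polynomial.mem_support_iff.mp hns) h1
        · exact (pow_ne_zero n (ne_of_gt hxpos)) h1
      rw [hempty]
      simpa using hsupp_pos
    · -- induction via Rolle
      have hgcard : g.support.card ≤ N := by
        have h1 : g.support.card ≤ (p.support.erase n).card := Finset.card_le_card hsub
        have h2 : (p.support.erase n).card = p.support.card - 1 :=
          Finset.card_erase_of_mem hns
        omega
      have hIH := ih g hg0 hgcard
      set s := p.roots.toFinset.filter fun x => 0 < x with hs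
      set t := g.roots.toFinset.filter fun x => 0 < x with ht
      have hinter : s.card ≤ (t \ s).card + 1 := by
        apply Finset.card_le_diff_of_interleaved
        intro x hx y hy hxy _
        rw [hs, Finset.mem_filter, Multiset.mem_toFinset, Polynomial.mem_roots hp] at hx hy
        obtain ⟨hxr, hxpos⟩ := hx
        obtain ⟨hyr, hypos⟩ := hy
        -- Rolle applied to f z = p.eval z / z ^ n
        set f : ℝ → ℝ := fun z => p.eval z / z ^ n with hf
        have hfc : ContinuousOn f (Set.Icc x y) := by
          apply ContinuousOn.div (p.continuous_aeval.continuousOn)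
            (continuousOn_pow n)
          intro z hz
          have : 0 < z := lt_of_lt_of_le hxpos hz.1
          exact pow_ne_zero n (ne_of_gt this)
        have hfI : f x = f y := by
          simp [hf, hxr.eq_zero, hyr.eq_zero]
        obtain ⟨z, hz, hdz⟩ := exists_deriv_eq_zero hxy hfc hfI
        have hzpos : 0 < z := lt_trans hxpos hz.1
        have hder : HasDerivAt f
            ((Polynomial.eval z (derivative p) * z ^ n - Polynomial.eval z p * ((n : ℝ) * z ^ (n - 1))) / (z ^ n) ^ 2) z := by
          exact (p.hasDerivAt z).div (hasDerivAt_pow n z) (pow_ne_zero n (ne_of_gt hzpos))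
        have hnum : Polynomial.eval z (derivative p) * z ^ n
            - Polynomial.eval z p * ((n : ℝ) * z ^ (n - 1)) = 0 := by
          have h0 := hder.deriv
          rw [hdz] at h0
          have hden : ((z ^ n) ^ 2 : ℝ) ≠ 0 := pow_ne_zero 2 (pow_ne_zero n (ne_of_gt hzpos))
          field_simp at h0
          linarith [h0]
        have hgz : g.eval z = 0 := by
          rw [hg]
          simp only [Polynomial.eval_sub, Polynomial.eval_mul, Polynomial.eval_X,
            Polynomial.eval_C]
          rcases Nat.eq_zero_or_pos n with hn0 | hn0
          · rw [hn0] at hnum ⊢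
            simp only [pow_zero, mul_one, Nat.cast_zero, zero_mul, mul_zero, sub_zero] at hnum ⊢
            rw [hnum]; ring
          · have hzn : z ^ n = z ^ (n - 1) * z := by
              rw [← pow_succ]
              congr 1
              omega
            have hzn1 : (z : ℝ) ^ (n - 1) ≠ 0 := pow_ne_zero _ (ne_of_gt hzpos)
            apply mul_left_cancel₀ hzn1
            rw [hzn] at hnum
            ring_nf
            ring_nf at hnum
            linarith
        refine ⟨z, ?_, hz.1, hz.2⟩
        rw [ht, Finset.mem_filter, Multiset.mem_toFinset, Polynomial.mem_roots hg0]
        exact ⟨hgz, hzpos⟩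
      have htcard : (t \ s).card ≤ t.card := Finset.card_le_card (Finset.sdiff_subset)
      have hgb : g.support.card < p.support.card :=
        lt_of_le_of_lt (Finset.card_le_card hsub) (Finset.card_erase_lt_of_mem hns)
      omega


lemma arith_lemma (a : ℝ) (ha : 1 < a) (m : ℕ) (hm : 1 ≤ m) (q : ℝ)
    (hq : 2 * (1 + Real.logb a 2 + Real.logb a 3) < q) :
    a ^ (-(((m : ℝ) * q) ^ 2)) ≤ (a ^ (-((m : ℝ) * q)) / (2 * m)) ^ m := by
  have ha0 : (0:ℝ) < a := by linarith
  have hla : 0 < Real.log a := Real.log_pos ha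
  have hmR : (1:ℝ) ≤ (m:ℝ) := by exact_mod_cast hm
  have hmpos : (0:ℝ) < m := by linarith
  set L : ℝ := Real.log 6 / Real.log a with hL
  have hlog6 : (1:ℝ) ≤ Real.log 6 := by
    rw [← Real.log_exp 1]
    apply Real.log_le_log (Real.exp_pos 1)
    calc Real.exp 1 ≤ 2.7182818286 := Real.exp_one_lt_d9.le
      _ ≤ 6 := by norm_num
  have hLpos : 0 < L := div_pos (by linarith) hla
  have hq' : 2 + 2 * L < q := by
    have h23 : Real.logb a 2 + Real.logb a 3 = L := by
      rw [hL, Real.logb, Real.logb, ← add_div]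
      congr 1
      rw [← Real.log_mul (by norm_num) (by norm_num)]
      norm_num
    linarith [hq, h23]
  have hqpos : 0 < q := by linarith
  -- key inequality on logs
  have hlog2m : Real.log (2 * m) ≤ (m:ℝ) := by
    rw [Real.log_mul (by norm_num) (by positivity)]
    have h1 : Real.log 2 ≤ 2 - 1 := Real.log_le_sub_one_of_pos (by norm_num)
    have h2 : Real.log m ≤ (m:ℝ) - 1 := Real.log_le_sub_one_of_pos hmpos
    linarith
  have hkey : (m:ℝ) * Real.log (2 * m) ≤ (m:ℝ)^2 * (q * (q - 1)) * Real.log a := by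
    have hq1 : 1 + 2 * L < q - 1 := by linarith
    have hprod : (2 + 2*L) * (1 + 2*L) ≤ q * (q - 1) := by
      apply mul_le_mul (by linarith) (by linarith) (by positivity) (by linarith)
    have h6L : 6 * L ≤ (2 + 2*L) * (1 + 2*L) := by nlinarith [sq_nonneg L]
    have hLla : L * Real.log a = Real.log 6 := by
      rw [hL]; field_simp
    have h1 : 6 * Real.log 6 ≤ q * (q - 1) * Real.log a := by
      calc 6 * Real.log 6 = 6 * L * Real.log a := by rw [mul_assoc, hLla]
        _ ≤ q * (q-1) * Real.log a := by
            apply mul_le_mul_of_nonneg_right _ hla.le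
            linarith
    calc (m:ℝ) * Real.log (2*m) ≤ (m:ℝ) * (m:ℝ) := by
          apply mul_le_mul_of_nonneg_left hlog2m (by positivity)
      _ ≤ (m:ℝ)^2 * (6 * Real.log 6) := by nlinarith
      _ ≤ (m:ℝ)^2 * (q * (q-1) * Real.log a) := by
          apply mul_le_mul_of_nonneg_left h1 (by positivity)
      _ = (m:ℝ)^2 * (q * (q-1)) * Real.log a := by ring
  -- convert to exp form
  have hz : (0:ℝ) < a ^ (-((m : ℝ) * q)) / (2 * m) := by
    apply div_pos (Real.rpow_pos_of_pos ha0 _) (by positivity)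
  have hrhs : (a ^ (-((m : ℝ) * q)) / (2 * m)) ^ m
      = Real.exp ((m:ℝ) * (-((m : ℝ) * q) * Real.log a - Real.log (2 * m))) := by
    rw [← Real.log_rpow ha0, ← Real.log_div (ne_of_gt (Real.rpow_pos_of_pos ha0 _)) (by positivity)]
    rw [← Real.log_pow]
    rw [Real.exp_log (pow_pos hz m)]
  have hlhs : a ^ (-(((m : ℝ) * q) ^ 2)) = Real.exp (-(((m : ℝ) * q) ^ 2) * Real.log a) := by
    rw [Real.rpow_def_of_pos ha0]
    ring_nf
  rw [hlhs, hrhs, Real.exp_le_exp]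
  nlinarith [hkey]

/-- Small-value lemma: a degree-`m` polynomial with leading coefficient of absolute value
at least `1` and at most `k` nonzero coefficients is at least `a^{-(mq)²}` on `[a,b]`
outside at most `2k+2` intervals of length at most `a^{-mq}`. -/
theorem stmt4 (k : ℕ) (hk : 2 ≤ k) (a b : ℝ) (ha : 1 < a) (hab : a < b)
    (m : ℕ) (hm : 1 ≤ m) (P : Polynomial ℝ)
    (hdeg : P.natDegree = m) (hlead : 1 ≤ |P.coeff m|)
    (hsparse : P.support.card ≤ k)
    (q : ℝ) (hq : 2 * (1 + Real.logb a 2 + Real.logb a 3) < q) :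
    ∃ S : Finset (ℝ × ℝ), S.card ≤ 2 * k + 2 ∧
      (∀ p ∈ S, p.2 - p.1 ≤ a ^ (-((m : ℝ) * q))) ∧
      (∀ p ∈ S, Set.Icc p.1 p.2 ⊆ Set.Icc a b) ∧
      ∀ x ∈ Set.Icc a b, (∀ p ∈ S, x ∉ Set.Icc p.1 p.2) →
        a ^ (-(((m : ℝ) * q) ^ 2)) ≤ |P.eval x| := by
  classical
  set δ : ℝ := a ^ (-((m : ℝ) * q)) with hδdef
  set ε : ℝ := a ^ (-(((m : ℝ) * q) ^ 2)) with hεdef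
  have ha0 : (0:ℝ) < a := lt_trans one_pos ha
  have hδpos : 0 < δ := Real.rpow_pos_of_pos ha0 _
  have hεpos : 0 < ε := Real.rpow_pos_of_pos ha0 _
  have hεB : ε ≤ (δ / (2 * m)) ^ m := arith_lemma a ha m hm q hq
  have hGP : ∀ c : ℝ, ∃ y ∈ Set.Icc c (c + δ), ε ≤ |P.eval y| := by
    intro c
    obtain ⟨y, hy, hb⟩ := good_point P m hm (le_of_eq hdeg) hlead δ hδpos c
    exact ⟨y, hy, le_trans hεB hb⟩
  have hPme : P.coeff m ≠ 0 := by
    intro h; rw [h] at hlead; simp at hlead; linarith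
  have hcoeffC : ∀ c : ℝ, (Polynomial.C c).coeff m = 0 := by
    intro c
    rw [Polynomial.coeff_C, if_neg (by omega)]
  have hPm0 : P - Polynomial.C ε ≠ 0 := by
    intro h
    apply hPme
    have := congrArg (fun p => Polynomial.coeff p m) h
    simpa [Polynomial.coeff_sub, hcoeffC, sub_eq_zero] using this
  have hPp0 : P + Polynomial.C ε ≠ 0 := by
    intro h
    apply hPme
    have := congrArg (fun p => Polynomial.coeff p m) h
    simpa [Polynomial.coeff_add, hcoeffC] using this
  have hsupp : ∀ Q : ℝ[X], (∀ j : ℕ, j ≠ 0 → Q.coeff j = P.coeff j) →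
      Q.support.card ≤ k + 1 := by
    intro Q hQ
    have hsub : Q.support ⊆ insert 0 P.support := by
      intro j hj
      rw [Polynomial.mem_support_iff] at hj
      rcases Nat.eq_zero_or_pos j with h0 | h0
      · exact h0 ▸ Finset.mem_insert_self _ _
      · apply Finset.mem_insert_of_mem
        rw [Polynomial.mem_support_iff, ← hQ j (by omega)]
        exact hj
    calc Q.support.card ≤ (insert 0 P.support).card := Finset.card_le_card hsub
      _ ≤ P.support.card + 1 := Finset.card_insert_le _ _
      _ ≤ k + 1 := by omega
  have hr1 : ((P - Polynomial.C ε).roots.toFinset.filter fun x => 0 < x).card ≤ k := by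
    have h1 := sparse_aux ((P - Polynomial.C ε).support.card) (P - Polynomial.C ε) hPm0 le_rfl
    have h2 := hsupp (P - Polynomial.C ε) (fun j hj => by
      rw [Polynomial.coeff_sub, Polynomial.coeff_C, if_neg hj, sub_zero])
    omega
  have hr2 : ((P + Polynomial.C ε).roots.toFinset.filter fun x => 0 < x).card ≤ k := by
    have h1 := sparse_aux ((P + Polynomial.C ε).support.card) (P + Polynomial.C ε) hPp0 le_rfl
    have h2 := hsupp (P + Polynomial.C ε) (fun j hj => by
      rw [Polynomial.coeff_add, Polynomial.coeff_C, if_neg hj, add_zero])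
    omega
  set R : Finset ℝ := ((P - Polynomial.C ε).roots.toFinset ∪
      (P + Polynomial.C ε).roots.toFinset).filter (fun r => a ≤ r ∧ r ≤ b) with hR
  have hRcard : R.card ≤ 2 * k := by
    have hsubR : R ⊆ ((P - Polynomial.C ε).roots.toFinset.filter fun x => 0 < x) ∪
        ((P + Polynomial.C ε).roots.toFinset.filter fun x => 0 < x) := by
      intro r hr
      rw [hR, Finset.mem_filter, Finset.mem_union] at hr
      obtain ⟨hmem, har, hrb⟩ := hr
      have hrpos : 0 < r := by linarith
      rcases hmem with h | h
      · exact Finset.mem_union_left _ (Finset.mem_filter.mpr ⟨h, hrpos⟩)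
      · exact Finset.mem_union_right _ (Finset.mem_filter.mpr ⟨h, hrpos⟩)
    calc R.card ≤ _ := Finset.card_le_card hsubR
      _ ≤ _ + _ := Finset.card_union_le _ _
      _ ≤ 2 * k := by omega
  refine ⟨insert (a, min b (a + δ)) (R.image fun r => (r, min b (r + δ))), ?_, ?_, ?_, ?_⟩
  · calc _ ≤ (R.image fun r => (r, min b (r + δ))).card + 1 := Finset.card_insert_le _ _
      _ ≤ R.card + 1 := by
          have := Finset.card_image_le (s := R) (f := fun r => (r, min b (r + δ)))
          omega
      _ ≤ 2 * k + 2 := by omega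
  · intro p hp
    rcases Finset.mem_insert.mp hp with h | h
    · rw [h]
      simp only
      linarith [min_le_right b (a + δ)]
    · obtain ⟨r, -, rfl⟩ := Finset.mem_image.mp h
      simp only
      linarith [min_le_right b (r + δ)]
  · intro p hp x hx
    rcases Finset.mem_insert.mp hp with h | h
    · rw [h] at hx
      exact ⟨hx.1, le_trans hx.2 (min_le_left _ _)⟩
    · obtain ⟨r, hrR, rfl⟩ := Finset.mem_image.mp h
      rw [hR, Finset.mem_filter] at hrR
      exact ⟨le_trans hrR.2.1 hx.1, le_trans hx.2 (min_le_left _ _)⟩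
  · intro x hx havoid
    by_contra hcon
    push_neg at hcon
    obtain ⟨hax, hxb⟩ := hx
    have h1 : x ∉ Set.Icc a (min b (a + δ)) :=
      havoid _ (Finset.mem_insert_self _ _)
    have h2 : min b (a + δ) < x := by
      by_contra h; push_neg at h; exact h1 ⟨hax, h⟩
    have haδx : a + δ < x := by
      rcases le_total b (a + δ) with hc | hc
      · rw [min_eq_left hc] at h2; linarith
      · rwa [min_eq_right hc] at h2
    set K := Set.Icc a x ∩ {y : ℝ | ε ≤ |P.eval y|} with hK
    have hKc : IsCompact K :=
      (isCompact_Icc).inter_right (isClosed_le continuous_const P.continuous.abs)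
    have hKne : K.Nonempty := by
      obtain ⟨y, hy, hgood⟩ := hGP a
      exact ⟨y, ⟨⟨hy.1, le_trans hy.2 (by linarith)⟩, hgood⟩⟩
    have hc_mem : sSup K ∈ K := hKc.sSup_mem hKne
    set c := sSup K with hcdef
    obtain ⟨⟨hac, hcx⟩, hcgood⟩ := hc_mem
    have hcxlt : c < x :=
      lt_of_le_of_ne hcx (fun h => absurd (h ▸ hcgood) (not_le.mpr hcon))
    have hbad : ∀ y : ℝ, c < y → y ≤ x → |P.eval y| < ε := by
      intro y hcy hyx
      by_contra hy; push_neg at hy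
      have hyK : y ∈ K := ⟨⟨le_trans hac hcy.le, hyx⟩, hy⟩
      have := le_csSup hKc.bddAbove hyK
      linarith
    have hxc : x - c ≤ δ := by
      by_contra hxc; push_neg at hxc
      obtain ⟨y, hy, hgood⟩ := hGP (x - δ)
      rw [sub_add_cancel] at hy
      have h3 : c < y := by linarith [hy.1]
      exact absurd hgood (not_le.mpr (hbad y h3 hy.2))
    have hceq : |P.eval c| = ε := by
      refine le_antisymm ?_ hcgood
      by_contra h; push_neg at h
      have hopen : IsOpen {y : ℝ | ε < |P.eval y|} :=
        isOpen_lt continuous_const P.continuous.abs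
      obtain ⟨η, hη, hball⟩ := Metric.isOpen_iff.mp hopen c h
      set y := min x (c + η / 2) with hy
      have hcy : c < y := lt_min hcxlt (by linarith)
      have hyx : y ≤ x := min_le_left _ _
      have hyball : y ∈ Metric.ball c η := by
        rw [Metric.mem_ball, Real.dist_eq]
        have h4 : y ≤ c + η / 2 := min_le_right _ _
        rw [abs_of_pos (by linarith : (0:ℝ) < y - c)]
        linarith
      have h5 := hball hyball
      rw [Set.mem_setOf_eq] at h5
      linarith [hbad y hcy hyx]
    have hcR : c ∈ R := by
      rw [hR, Finset.mem_filter, Finset.mem_union]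
      refine ⟨?_, hac, le_trans hcx hxb⟩
      rcases (abs_eq hεpos.le).mp hceq with h | h
      · left
        rw [Multiset.mem_toFinset, Polynomial.mem_roots hPm0]
        simp [Polynomial.IsRoot, h]
      · right
        rw [Multiset.mem_toFinset, Polynomial.mem_roots hPp0]
        simp [Polynomial.IsRoot, h]
    have hfin := havoid (c, min b (c + δ))
      (Finset.mem_insert_of_mem (Finset.mem_image_of_mem _ hcR))
    exact hfin ⟨hcx, le_min hxb (by linarith)⟩
end

section
/- A real polynomial P with at most k nonzero coefficients (k ≥ 1) has at most 2k distinct real roots, counting 0 if it is a root. -/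
open Polynomial Set

/-- Interleaving lemma: if strictly between any two elements of a finite set `A`
there is an element of a finite set `B`, then `A.ncard ≤ B.ncard + 1`. -/
lemma interleave_ncard : ∀ n : ℕ, ∀ A B : Set ℝ, A.Finite → B.Finite → A.ncard = n →
    (∀ a ∈ A, ∀ b ∈ A, a < b → ∃ c ∈ B, a < c ∧ c < b) → A.ncard ≤ B.ncard + 1 := by
  intro n
  induction n using Nat.strong_induction_on with
  | _ n ih =>
    intro A B hA hB hcard hbet
    rcases le_or_gt n 1 with hn | hn
    · omega
    -- A has at least 2 elements
    have hAne : A.Nonempty := Set.nonempty_of_ncard_ne_zero (by omega)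
    obtain ⟨m, hmA, hmmax⟩ : ∃ m ∈ A, ∀ a' ∈ A, id m ≤ id a' → id m = id a' := by
      obtain ⟨m, hmA0, hm0⟩ := Set.Finite.exists_maximalFor id A hA hAne
      exact ⟨m, hmA0, fun a' ha' h => le_antisymm h (hm0 ha' h)⟩
    set A' : Set ℝ := A \ {m} with hA'def
    have hA'fin : A'.Finite := hA.subset diff_subset
    have hA'card : A'.ncard = n - 1 := by
      rw [hA'def, Set.ncard_diff_singleton_of_mem hmA, hcard]
    have hA'ne : A'.Nonempty := Set.nonempty_of_ncard_ne_zero (by omega)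
    obtain ⟨m', hm'A', hm'max⟩ : ∃ m ∈ A', ∀ a' ∈ A', id m ≤ id a' → id m = id a' := by
      obtain ⟨m, hmA0, hm0⟩ := Set.Finite.exists_maximalFor id A' hA'fin hA'ne
      exact ⟨m, hmA0, fun a' ha' h => le_antisymm h (hm0 ha' h)⟩
    have hm'A : m' ∈ A := hm'A'.1
    have hm'ne : m' ≠ m := by simpa using hm'A'.2
    have hm'lt : m' < m := by
      rcases lt_or_ge m' m with h | h
      · exact h
      · exact absurd (hmmax m' hm'A h) (Ne.symm hm'ne)
    obtain ⟨c, hcB, hm'c, hcm⟩ := hbet m' hm'A m hmA hm'lt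
    set B' : Set ℝ := B ∩ Iio c with hB'def
    have hB'fin : B'.Finite := hB.subset inter_subset_left
    have hbet' : ∀ a ∈ A', ∀ b ∈ A', a < b → ∃ d ∈ B', a < d ∧ d < b := by
      intro a ha b hb hab
      obtain ⟨d, hdB, had, hdb⟩ := hbet a ha.1 b hb.1 hab
      have hbm' : b ≤ m' := by
        rcases le_or_gt b m' with h | h
        · exact h
        · exact absurd (hm'max b hb h.le) h.ne
      exact ⟨d, ⟨hdB, lt_of_lt_of_le (lt_of_lt_of_le hdb hbm') hm'c.le⟩, had, hdb⟩
    have ihA' := ih (n - 1) (by omega) A' B' hA'fin hB'fin hA'card hbet'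
    have hB'le : B'.ncard ≤ B.ncard - 1 := by
      have hsub : B' ⊆ B \ {c} := by
        intro x ⟨hxB, hxlt⟩
        exact ⟨hxB, by simp; exact ne_of_lt hxlt⟩
      calc B'.ncard ≤ (B \ {c}).ncard := Set.ncard_le_ncard hsub (hB.subset diff_subset)
        _ = B.ncard - 1 := Set.ncard_diff_singleton_of_mem hcB
    have hBpos : 1 ≤ B.ncard := (Set.ncard_pos hB).mpr ⟨c, hcB⟩
    omega

/-- Positive roots of `P` interleave with derivative's positive roots via Rolle. -/
lemma rolle_interleave (P : ℝ[X]) :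
    ∀ a ∈ {x : ℝ | 0 < x ∧ P.eval x = 0}, ∀ b ∈ {x : ℝ | 0 < x ∧ P.eval x = 0}, a < b →
      ∃ c ∈ {x : ℝ | 0 < x ∧ P.derivative.eval x = 0}, a < c ∧ c < b := by
  intro a ⟨ha0, haP⟩ b ⟨hb0, hbP⟩ hab
  obtain ⟨c, hc, hc'⟩ := exists_deriv_eq_zero hab
    (P.continuousOn) (by simp [haP, hbP])
  rw [Polynomial.deriv] at hc'
  exact ⟨c, ⟨lt_trans ha0 hc.1, hc'⟩, hc.1, hc.2⟩

/-- Key Descartes-type bound: a nonzero real polynomial with `s` nonzero coefficients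
has fewer than `s` positive roots. -/
lemma pos_roots_lt_support : ∀ n : ℕ, ∀ P : ℝ[X], P.natDegree = n → P ≠ 0 →
    {x : ℝ | 0 < x ∧ P.eval x = 0}.ncard + 1 ≤ P.support.card := by
  intro n
  induction n using Nat.strong_induction_on with
  | _ n ih =>
    intro P hdeg hP
    have hsupp : 1 ≤ P.support.card :=
      Finset.card_pos.mpr (Polynomial.support_nonempty.mpr hP)
    have hfinA : {x : ℝ | 0 < x ∧ P.eval x = 0}.Finite :=
      (P.finite_setOf_isRoot hP).subset (fun x hx => hx.2)
    by_cases h0 : P.coeff 0 = 0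
    · -- P = divX P * X; positive roots unchanged, support not larger, degree drops
      have hfac : P.divX * X = P := by
        have := P.divX_mul_X_add
        rwa [h0, map_zero, add_zero] at this
      have hdX : P.divX ≠ 0 := by
        intro h; rw [h, zero_mul] at hfac; exact hP hfac.symm
      have hndeg : P.natDegree ≠ 0 := by
        intro h
        have := Polynomial.eq_C_of_natDegree_eq_zero h
        rw [this, h0, map_zero] at hP; exact hP rfl
      have hdeg' : P.divX.natDegree = P.natDegree - 1 := by
        have : P.natDegree = P.divX.natDegree + 1 := by
          conv_lhs => rw [← hfac]
          rw [natDegree_mul hdX X_ne_zero, natDegree_X]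
        omega
      have hlt : P.divX.natDegree < n := by omega
      have hsame : {x : ℝ | 0 < x ∧ P.eval x = 0} =
          {x : ℝ | 0 < x ∧ P.divX.eval x = 0} := by
        ext x
        simp only [mem_setOf_eq, and_congr_right_iff]
        intro hx
        conv_lhs => rw [← hfac]
        simp only [eval_mul, eval_X, mul_eq_zero]
        constructor
        · rintro (h | h); exact h; exact absurd h (ne_of_gt hx)
        · exact Or.inl
      have hcardle : P.divX.support.card ≤ P.support.card := by
        apply Finset.card_le_card_of_injOn (· + 1)
        · intro a ha
          show a + 1 ∈ P.support
          rw [Finset.mem_coe] at ha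
          rw [Polynomial.mem_support_iff] at ha ⊢
          rwa [← Polynomial.coeff_divX]
        · exact fun a _ b _ h => by simpa using h
      rw [hsame]
      exact le_trans (ih _ hlt P.divX rfl hdX) hcardle
    · -- constant coefficient nonzero
      by_cases hndeg : P.natDegree = 0
      · -- constant polynomial, no roots
        have hC := Polynomial.eq_C_of_natDegree_eq_zero hndeg
        have : {x : ℝ | 0 < x ∧ P.eval x = 0} = ∅ := by
          ext x
          simp only [mem_setOf_eq, mem_empty_iff_false, iff_false, not_and]
          intro _ hx
          exact h0 (by rwa [hC, eval_C] at hx)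
        rw [this, Set.ncard_empty]
        omega
      · -- use the derivative and Rolle
        set P' := P.derivative with hP'def
        have hP'ne : P' ≠ 0 := by
          intro h
          have hmem : P.natDegree - 1 ∈ P'.support := by
            rw [hP'def, Polynomial.mem_support_derivative,
              Nat.sub_add_cancel (Nat.one_le_iff_ne_zero.mpr hndeg)]
            exact Polynomial.natDegree_mem_support_of_nonzero hP
          rw [h] at hmem; simp at hmem
        have hdP' : P'.natDegree < n := hdeg ▸ Polynomial.natDegree_derivative_lt hndeg
        have hsuppP' : P'.support.card + 1 ≤ P.support.card := by
          have himg : (P'.support.image (· + 1)).card = P'.support.card :=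
            Finset.card_image_of_injective _ (fun a b h => by omega)
          have hsub : P'.support.image (· + 1) ⊆ P.support.erase 0 := by
            intro m hm
            simp only [Finset.mem_image] at hm
            obtain ⟨a, ha, rfl⟩ := hm
            rw [Finset.mem_erase]
            refine ⟨by omega, ?_⟩
            rwa [← Polynomial.mem_support_derivative]
          have := Finset.card_le_card hsub
          rw [himg] at this
          have h0mem : (0 : ℕ) ∈ P.support := Polynomial.mem_support_iff.mpr h0
          have := Finset.card_erase_of_mem h0mem ▸ this
          omega
        have hB : {x : ℝ | 0 < x ∧ P'.eval x = 0}.Finite :=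
          (P'.finite_setOf_isRoot hP'ne).subset (fun x hx => hx.2)
        have hinter := interleave_ncard _ _ _ hfinA hB rfl (rolle_interleave P)
        have hIH := ih _ hdP' P' rfl hP'ne
        omega

lemma comp_neg_X_coeff (P : ℝ[X]) (n : ℕ) :
    (P.comp (-X)).coeff n = (-1) ^ n * P.coeff n := by
  induction P using Polynomial.induction_on' with
  | add p q hp hq => simp [add_comp, hp, hq, mul_add]
  | monomial m a =>
    have hC1 : (C ((-1 : ℝ) ^ m) : ℝ[X]) = (-1) ^ m := by simp
    calc ((monomial m a).comp (-X)).coeff n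
        = (C a * ((-1) ^ m * X ^ m) : ℝ[X]).coeff n := by
          rw [Polynomial.monomial_comp, ← neg_one_mul (X : ℝ[X]), mul_pow]
      _ = (C ((-1 : ℝ) ^ m * a) * X ^ m).coeff n := by
          rw [map_mul, hC1]; ring_nf
      _ = (-1 : ℝ) ^ m * a * (X ^ m : ℝ[X]).coeff n := coeff_C_mul _
      _ = (-1) ^ n * (monomial m a).coeff n := by
          rw [Polynomial.coeff_X_pow, Polynomial.coeff_monomial]
          by_cases h : n = m
          · subst h; simp
          · rw [if_neg h, if_neg (fun he : m = n => h he.symm), mul_zero, mul_zero]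

/-- A nonzero real polynomial with at most `k` nonzero coefficients has at most `2k`
distinct real roots. -/
theorem stmt5 (k : ℕ) (hk : 1 ≤ k) (P : Polynomial ℝ) (hP : P ≠ 0)
    (hsparse : P.support.card ≤ k) :
    {x : ℝ | Polynomial.eval x P = 0}.Finite ∧
      {x : ℝ | Polynomial.eval x P = 0}.ncard ≤ 2 * k := by
  have hfin : {x : ℝ | Polynomial.eval x P = 0}.Finite := P.finite_setOf_isRoot hP
  refine ⟨hfin, ?_⟩
  set Q := P.comp (-X) with hQ
  have hQP : ∀ y : ℝ, Q.eval y = P.eval (-y) := by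
    intro y; rw [hQ, eval_comp]; simp
  have hQne : Q ≠ 0 := by
    intro h
    apply hP
    have h2 : Q.comp (-X) = P := by
      rw [hQ, Polynomial.comp_assoc]; simp
    rw [← h2, h, zero_comp]
  have hQsupp : Q.support.card ≤ P.support.card := by
    apply Finset.card_le_card
    intro m hm
    rw [Polynomial.mem_support_iff] at hm ⊢
    rw [hQ, comp_neg_X_coeff] at hm
    intro h; rw [h, mul_zero] at hm; exact hm rfl
  have hpos := pos_roots_lt_support P.natDegree P rfl hP
  have hQpos := pos_roots_lt_support Q.natDegree Q rfl hQne
  set Apos := {x : ℝ | 0 < x ∧ P.eval x = 0} with hApos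
  set Aneg := {x : ℝ | x < 0 ∧ P.eval x = 0} with hAneg
  set BQ := {x : ℝ | 0 < x ∧ Q.eval x = 0} with hBQ
  have hnegeq : Aneg = Neg.neg '' BQ := by
    ext x
    simp only [hAneg, hBQ, mem_image, mem_setOf_eq]
    constructor
    · intro ⟨hx, hex⟩
      exact ⟨-x, ⟨by linarith, by rw [hQP]; simpa⟩, by ring⟩
    · rintro ⟨y, ⟨hy, hey⟩, rfl⟩
      rw [hQP] at hey
      exact ⟨by linarith, hey⟩
  have hposfin : Apos.Finite := hfin.subset (fun x hx => hx.2)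
  have hnegfin : Aneg.Finite := hfin.subset (fun x hx => hx.2)
  have hsub : {x : ℝ | Polynomial.eval x P = 0} ⊆ {(0 : ℝ)} ∪ (Apos ∪ Aneg) := by
    intro x hx
    rcases lt_trichotomy x 0 with h | h | h
    · exact Or.inr (Or.inr ⟨h, hx⟩)
    · exact Or.inl h
    · exact Or.inr (Or.inl ⟨h, hx⟩)
  have hnegcard : Aneg.ncard = BQ.ncard := by
    rw [hnegeq, Set.ncard_image_of_injective _ neg_injective]
  have hcard1 : {x : ℝ | Polynomial.eval x P = 0}.ncard ≤
      ({(0 : ℝ)} ∪ (Apos ∪ Aneg)).ncard :=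
    Set.ncard_le_ncard hsub (((Set.finite_singleton 0).union (hposfin.union hnegfin)))
  have hcard2 : ({(0 : ℝ)} ∪ (Apos ∪ Aneg)).ncard ≤ 1 + (Apos.ncard + Aneg.ncard) := by
    calc ({(0 : ℝ)} ∪ (Apos ∪ Aneg)).ncard
        ≤ ({(0 : ℝ)} : Set ℝ).ncard + (Apos ∪ Aneg).ncard :=
          Set.ncard_union_le _ _
      _ ≤ 1 + (Apos.ncard + Aneg.ncard) := by
          rw [Set.ncard_singleton]
          exact Nat.add_le_add_left (Set.ncard_union_le _ _) 1
  omega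
end
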